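/- Kantorovich's theorem on the Newton method (simplified form): let f : ℝ → ℝ be twice continuously differentiable on an interval containing x₀, with |f''| ≤ K on the interval, f'(x₀) ≠ 0, |1/f'(x₀)| ≤ B, and |f(x₀)/f'(x₀)| ≤ η. If h := KBη ≤ 1/2 and the closed ball of radius (1 - √(1-2h))/(KB) around x₀ is contained in the interval, then the Newton iteration x_{n+1} = x_n - f(x_n)/f'(x_n) is well-defined, stays in this ball, and converges to a root of f. -/

import Mathlib

open Filter Set

set_option maxHeartbeats 1000000


lemma taylor2 {f f' f'' : ℝ → ℝ} {D : Set ℝ} (hD : Convex ℝ D)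
    (hf : ∀ x ∈ D, HasDerivAt f (f' x) x) (hf' : ∀ x ∈ D, HasDerivAt f' (f'' x) x)
    {K : ℝ} (hK : ∀ x ∈ D, |f'' x| ≤ K) {a b : ℝ} (ha : a ∈ D) (hb : b ∈ D) :
    |f b - f a - f' a * (b - a)| ≤ K / 2 * (b - a) ^ 2 := by
  have lip : ∀ x ∈ D, |f' x - f' a| ≤ K * |x - a| := by
    intro x hx
    have := hD.norm_image_sub_le_of_norm_hasDerivWithin_le
      (f := f') (f' := f'') (fun y hy => (hf' y hy).hasDerivWithinAt)
      (fun y hy => hK y hy) ha hx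
    simpa [Real.norm_eq_abs] using this
  -- parametrize segment
  set v := b - a with hv
  have hmem : ∀ θ ∈ Icc (0:ℝ) 1, a + θ * v ∈ D := by
    intro θ hθ
    have := hD ha hb (by linarith [hθ.1, hθ.2] : (0:ℝ) ≤ 1 - θ) hθ.1 (by ring)
    simpa [smul_eq_mul] using (by
      have : (1 - θ) * a + θ * b = a + θ * v := by ring
      rw [← this]; exact hD ha hb (by linarith [hθ.2]) hθ.1 (by ring))
  set F : ℝ → ℝ := fun θ => f (a + θ * v) - f a - θ * (f' a * v) with hF
  have hF' : ∀ θ ∈ Icc (0:ℝ) 1, HasDerivAt F ((f' (a + θ * v) - f' a) * v) θ := by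
    intro θ hθ
    have h1 : HasDerivAt (fun θ : ℝ => a + θ * v) v θ := by
      simpa using ((hasDerivAt_id θ).mul_const v).const_add a
    have h2 : HasDerivAt (fun θ => f (a + θ * v)) (f' (a + θ * v) * v) θ :=
      (hf _ (hmem θ hθ)).comp θ h1
    have := (h2.sub_const (f a)).sub (((hasDerivAt_id θ).mul_const (f' a * v)))
    exact this.congr_deriv (by ring)
  have key := image_norm_le_of_norm_deriv_right_le_deriv_boundary
    (f := F) (f' := fun θ => (f' (a + θ * v) - f' a) * v) (a := 0) (b := 1)
    (fun θ hθ => ((hF' θ hθ).continuousAt.continuousWithinAt))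
    (fun θ hθ => (hF' θ (Ico_subset_Icc_self hθ)).hasDerivWithinAt.mono (by intro x hx; exact mem_of_mem_of_subset hx (subset_univ _)))
    (B := fun θ => K / 2 * v ^ 2 * θ ^ 2) (B' := fun θ => K * v ^ 2 * θ)
    (by simp [hF]) (fun θ => by simpa using ((hasDerivAt_pow 2 θ).const_mul (K/2*v^2)).congr_deriv (by ring))
    (fun θ hθ => by
      have h1 := lip _ (hmem θ (Ico_subset_Icc_self hθ))
      have h2 : |a + θ * v - a| = θ * |v| := by
        rw [show a + θ * v - a = θ * v by ring, abs_mul, abs_of_nonneg hθ.1]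
      rw [Real.norm_eq_abs, abs_mul]
      calc |f' (a + θ * v) - f' a| * |v| ≤ K * (θ * |v|) * |v| := by
            apply mul_le_mul_of_nonneg_right _ (abs_nonneg v)
            rw [← h2]; exact h1
        _ = K * v ^ 2 * θ := by rw [← sq_abs v]; ring
    )
  have hk := key (right_mem_Icc.2 zero_le_one)
  have e : a + v = b := by rw [hv]; ring
  simpa [hF, e, Real.norm_eq_abs] using hk


noncomputable def newtonMaj (c η : ℝ) : ℕ → ℝ
  | 0 => 0
  | n + 1 => newtonMaj c η n +
      (c / 2 * newtonMaj c η n ^ 2 - newtonMaj c η n + η) / (1 - c * newtonMaj c η n)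

lemma maj_step {c η s r t t' : ℝ} (hc : 0 < c) (hs2 : s ^ 2 = 1 - 2 * (c * η)) (hs0 : 0 ≤ s)
    (hcr : c * r = 1 - s) (h0 : 0 ≤ t) (h1 : t ≤ r) (h2 : 0 < 1 - c * t)
    (ht' : t' = t + (c / 2 * t ^ 2 - t + η) / (1 - c * t)) :
    t ≤ t' ∧ t' ≤ r ∧ 0 < 1 - c * t' ∧ r - t' ≤ (r - t) / 2 := by
  have hct : c * t ≤ c * r := by nlinarith
  have hs1 : s ≤ 1 - c * t := by linarith [hcr ▸ hct]
  have hφ : 0 ≤ c / 2 * t ^ 2 - t + η := by nlinarith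
  have hrη : c / 2 * r ^ 2 - r + η = 0 := by nlinarith
  have hA : t ≤ t' := by
    rw [ht']; linarith [div_nonneg hφ h2.le]
  have hid : r - t' = c / 2 * (r - t) ^ 2 / (1 - c * t) := by
    rw [ht', eq_div_iff h2.ne']
    have hm : (t + (c / 2 * t ^ 2 - t + η) / (1 - c * t)) * (1 - c * t) =
        t * (1 - c * t) + (c / 2 * t ^ 2 - t + η) := by
      rw [add_mul, div_mul_cancel₀ _ h2.ne']
    linear_combination -hm - hrη
  have hB : t' ≤ r := by
    have : 0 ≤ c / 2 * (r - t) ^ 2 / (1 - c * t) := by positivity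
    linarith [hid ▸ this]
  have hC : 0 < 1 - c * t' := by
    rcases eq_or_lt_of_le h1 with he | hlt
    · have : c / 2 * t ^ 2 - t + η = 0 := by rw [he]; exact hrη
      rw [ht', this] at *
      simpa using h2
    · have hpos : 0 < c / 2 * (r - t) ^ 2 / (1 - c * t) := div_pos (by nlinarith [sq_nonneg (r - t), mul_pos (sub_pos.2 hlt) (sub_pos.2 hlt)]) h2
      have : r - t' > 0 := hid ▸ hpos
      nlinarith
  have hD : r - t' ≤ (r - t) / 2 := by
    rw [hid, div_le_div_iff₀ h2 two_pos]
    nlinarith [mul_nonneg (sub_nonneg.2 h1) hs0]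
  exact ⟨hA, hB, hC, hD⟩

lemma maj_phi {c η t t' : ℝ} (h2 : (1 : ℝ) - c * t ≠ 0)
    (ht' : t' = t + (c / 2 * t ^ 2 - t + η) / (1 - c * t)) :
    c / 2 * t' ^ 2 - t' + η = c / 2 * (t' - t) ^ 2 := by
  have key : (t' - t) * (1 - c * t) = c / 2 * t ^ 2 - t + η := by
    rw [ht', add_sub_cancel_left, div_mul_cancel₀ _ h2]
  linear_combination (-1 : ℝ) * key

/-- Kantorovich's convergence theorem for the Newton method (scalar case). -/
theorem kantorovich_newton
    (f f' f'' : ℝ → ℝ) (I : Set ℝ) (x₀ : ℝ) (K B η : ℝ)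
    (hI : I.OrdConnected) (hx₀ : x₀ ∈ I)
    (hdf : ∀ x ∈ I, HasDerivAt f (f' x) x)
    (hdf' : ∀ x ∈ I, HasDerivAt f' (f'' x) x)
    (hf''cont : ContinuousOn f'' I)
    (hK : 0 < K) (hbound : ∀ x ∈ I, |f'' x| ≤ K)
    (hB : 0 < B) (hf'x₀ : f' x₀ ≠ 0) (hBbound : |1 / f' x₀| ≤ B)
    (hη : |f x₀ / f' x₀| ≤ η)
    (h : K * B * η ≤ 1 / 2)
    (hball : Metric.closedBall x₀ ((1 - Real.sqrt (1 - 2 * (K * B * η))) / (K * B)) ⊆ I) :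
    ∀ newton : ℕ → ℝ,
      newton 0 = x₀ →
      (∀ n : ℕ, newton (n + 1) = newton n - f (newton n) / f' (newton n)) →
      (∀ n : ℕ, f' (newton n) ≠ 0) ∧
      (∀ n : ℕ, newton n ∈
        Metric.closedBall x₀ ((1 - Real.sqrt (1 - 2 * (K * B * η))) / (K * B))) ∧
      ∃ xs ∈ Metric.closedBall x₀ ((1 - Real.sqrt (1 - 2 * (K * B * η))) / (K * B)),
        Tendsto newton atTop (nhds xs) ∧ f xs = 0 := by
  intro newton hn0 hnrec
  set s : ℝ := Real.sqrt (1 - 2 * (K * B * η)) with hsdef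
  set r : ℝ := (1 - s) / (K * B) with hrdef
  have hc : 0 < K * B := mul_pos hK hB
  have hη0 : 0 ≤ η := le_trans (abs_nonneg _) hη
  have harg : 0 ≤ 1 - 2 * (K * B * η) := by linarith
  have hs2 : s ^ 2 = 1 - 2 * (K * B * η) := Real.sq_sqrt harg
  have hs2' : s ^ 2 = 1 - 2 * (K * B * η) := hs2
  have hs0 : 0 ≤ s := Real.sqrt_nonneg _
  have hs1 : s ≤ 1 := by nlinarith [mul_nonneg hc.le hη0]
  have hcr : (K * B) * r = 1 - s := by rw [hrdef]; field_simp
  have hr0 : 0 ≤ r := by rw [hrdef]; exact div_nonneg (by linarith) hc.le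
  set t : ℕ → ℝ := newtonMaj (K * B) η with htdef
  have ht0 : t 0 = 0 := rfl
  have htsucc : ∀ n, t (n + 1) =
      t n + ((K * B) / 2 * t n ^ 2 - t n + η) / (1 - (K * B) * t n) := fun n => rfl
  have tfacts : ∀ n, 0 ≤ t n ∧ t n ≤ r ∧ 0 < 1 - (K * B) * t n ∧
      t n ≤ t (n + 1) ∧ r - t (n + 1) ≤ (r - t n) / 2 := by
    intro n
    induction n with
    | zero =>
      have b1 : 0 ≤ t 0 := le_of_eq ht0.symm
      have b2 : t 0 ≤ r := by rw [ht0]; exact hr0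
      have b3 : 0 < 1 - (K * B) * t 0 := by rw [ht0]; norm_num
      obtain ⟨s1, s2, s3, s4⟩ := maj_step hc hs2' hs0 hcr b1 b2 b3 (htsucc 0)
      exact ⟨b1, b2, b3, s1, s4⟩
    | succ n ih =>
      obtain ⟨i1, i2, i3, i4, i5⟩ := ih
      obtain ⟨s1, s2, s3, _⟩ := maj_step hc hs2' hs0 hcr i1 i2 i3 (htsucc n)
      obtain ⟨u1, u2, u3, u4⟩ := maj_step hc hs2' hs0 hcr (le_trans i1 i4) s2 s3 (htsucc (n + 1))
      exact ⟨le_trans i1 i4, s2, s3, u1, u4⟩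
  have rate : ∀ n, r - t n ≤ r / 2 ^ n := by
    intro n
    induction n with
    | zero => simp [ht0]
    | succ n ih =>
      have h1 := (tfacts n).2.2.2.2
      have : (r - t n) / 2 ≤ (r / 2 ^ n) / 2 := by linarith
      calc r - t (n + 1) ≤ (r - t n) / 2 := h1
        _ ≤ (r / 2 ^ n) / 2 := this
        _ = r / 2 ^ (n + 1) := by rw [pow_succ]; ring
  have hDsub : Metric.closedBall x₀ r ⊆ I := hball
  have hDconv : Convex ℝ (Metric.closedBall x₀ r) := convex_closedBall x₀ r
  have memD : ∀ {y : ℝ}, |y - x₀| ≤ r → y ∈ Metric.closedBall x₀ r := by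
    intro y hy
    simpa [Metric.mem_closedBall, Real.dist_eq] using hy
  have hx₀D : x₀ ∈ Metric.closedBall x₀ r := memD (by simpa using hr0)
  have lip : ∀ x ∈ Metric.closedBall x₀ r, ∀ y ∈ Metric.closedBall x₀ r,
      |f' x - f' y| ≤ K * |x - y| := by
    intro x hx y hy
    have := hDconv.norm_image_sub_le_of_norm_hasDerivWithin_le (f := f') (f' := f'')
      (fun z hz => (hdf' z (hDsub hz)).hasDerivWithinAt)
      (fun z hz => by simpa [Real.norm_eq_abs] using hbound z (hDsub hz)) hy hx
    simpa [Real.norm_eq_abs] using this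
  have tay : ∀ a ∈ Metric.closedBall x₀ r, ∀ b ∈ Metric.closedBall x₀ r,
      |f b - f a - f' a * (b - a)| ≤ K / 2 * (b - a) ^ 2 := by
    intro a ha b hb
    exact taylor2 hDconv (fun z hz => hdf z (hDsub hz)) (fun z hz => hdf' z (hDsub hz))
      (fun z hz => hbound z (hDsub hz)) ha hb
  have hfx0 : 1 / B ≤ |f' x₀| := by
    have h1 : |1 / f' x₀| = 1 / |f' x₀| := by rw [abs_div, abs_one]
    have h2 : 0 < |f' x₀| := abs_pos.2 hf'x₀
    rw [h1, div_le_iff₀ h2] at hBbound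
    rw [div_le_iff₀ hB]
    nlinarith
  have fder : ∀ n, |newton n - x₀| ≤ t n → (1 - (K * B) * t n) / B ≤ |f' (newton n)| := by
    intro n hn
    have hmem : newton n ∈ Metric.closedBall x₀ r := memD (le_trans hn (tfacts n).2.1)
    have hl := lip _ hmem _ hx₀D
    have h3 : |f' x₀| - |f' (newton n)| ≤ |f' (newton n) - f' x₀| := by
      have := abs_sub_abs_le_abs_sub (f' x₀) (f' (newton n))
      rw [abs_sub_comm] at this
      linarith
    have hKt : K * |newton n - x₀| ≤ K * t n := mul_le_mul_of_nonneg_left hn hK.le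
    have heq : (1 - (K * B) * t n) / B = 1 / B - K * t n := by field_simp
    rw [heq]
    linarith
  have main : ∀ n, |newton n - x₀| ≤ t n ∧
      |f (newton n) / f' (newton n)| ≤ t (n + 1) - t n := by
    intro n
    induction n with
    | zero =>
      constructor
      · simp [hn0, ht0]
      · have ht1 : t 1 = η := by rw [htsucc 0, ht0]; norm_num
        rw [hn0, ht1, ht0]
        simpa using hη
    | succ n ih =>
      obtain ⟨ih1, ih2⟩ := ih
      have hstep : newton (n + 1) - newton n = -(f (newton n) / f' (newton n)) := by
        rw [hnrec n]; ring
      have hd1 : |newton (n + 1) - newton n| ≤ t (n + 1) - t n := by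
        rw [hstep, abs_neg]; exact ih2
      have g1 : |newton (n + 1) - x₀| ≤ t (n + 1) := by
        have := abs_sub_le (newton (n + 1)) (newton n) x₀
        linarith
      refine ⟨g1, ?_⟩
      have hf'n := fder n ih1
      have hpos_n : 0 < (1 - (K * B) * t n) / B := div_pos (tfacts n).2.2.1 hB
      have hne : f' (newton n) ≠ 0 := abs_pos.1 (lt_of_lt_of_le hpos_n hf'n)
      have hmem_n : newton n ∈ Metric.closedBall x₀ r := memD (le_trans ih1 (tfacts n).2.1)
      have hmem_n1 : newton (n + 1) ∈ Metric.closedBall x₀ r :=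
        memD (le_trans g1 (tfacts (n + 1)).2.1)
      have htay := tay _ hmem_n _ hmem_n1
      have hcanc : f (newton n) + f' (newton n) * (newton (n + 1) - newton n) = 0 := by
        rw [hstep]; field_simp
        ring
      have hfb : |f (newton (n + 1))| ≤ K / 2 * (t (n + 1) - t n) ^ 2 := by
        have he : f (newton (n + 1)) =
            f (newton (n + 1)) - f (newton n) - f' (newton n) * (newton (n + 1) - newton n) := by
          linarith
        have h1 : |f (newton (n + 1))| ≤ K / 2 * (newton (n + 1) - newton n) ^ 2 := by
          rw [he]; exact htay
        have h2 : (newton (n + 1) - newton n) ^ 2 ≤ (t (n + 1) - t n) ^ 2 := by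
          rw [← sq_abs (newton (n + 1) - newton n)]
          exact pow_le_pow_left₀ (abs_nonneg _) hd1 2
        nlinarith
      have hf'n1 := fder (n + 1) g1
      have hd : 0 < 1 - (K * B) * t (n + 1) := (tfacts (n + 1)).2.2.1
      have hpos1 : 0 < (1 - (K * B) * t (n + 1)) / B := div_pos hd hB
      have hne1 : f' (newton (n + 1)) ≠ 0 := abs_pos.1 (lt_of_lt_of_le hpos1 hf'n1)
      have hphi : (K * B) / 2 * (t (n + 1)) ^ 2 - t (n + 1) + η =
          (K * B) / 2 * (t (n + 1) - t n) ^ 2 :=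
        maj_phi (ne_of_gt (tfacts n).2.2.1) (htsucc n)
      have hφpos : 0 ≤ (K * B) / 2 * (t (n + 1)) ^ 2 - t (n + 1) + η := by
        rw [hphi]; positivity
      have hnum : |f (newton (n + 1))| ≤
          ((K * B) / 2 * (t (n + 1)) ^ 2 - t (n + 1) + η) / B := by
        rw [hphi, le_div_iff₀ hB]
        have := mul_le_mul_of_nonneg_right hfb hB.le
        linarith [this, (by ring : K / 2 * (t (n + 1) - t n) ^ 2 * B = K * B / 2 * (t (n + 1) - t n) ^ 2)]
      have hT : t (n + 1 + 1) - t (n + 1) =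
          ((K * B) / 2 * (t (n + 1)) ^ 2 - t (n + 1) + η) / (1 - (K * B) * t (n + 1)) := by
        rw [htsucc (n + 1)]; ring
      rw [hT, abs_div, div_le_div_iff₀ (abs_pos.2 hne1) hd]
      have f1 : |f (newton (n + 1))| * (1 - (K * B) * t (n + 1)) ≤
          (((K * B) / 2 * (t (n + 1)) ^ 2 - t (n + 1) + η) / B) * (1 - (K * B) * t (n + 1)) :=
        mul_le_mul_of_nonneg_right hnum hd.le
      have f2 : ((K * B) / 2 * (t (n + 1)) ^ 2 - t (n + 1) + η) * ((1 - (K * B) * t (n + 1)) / B) ≤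
          ((K * B) / 2 * (t (n + 1)) ^ 2 - t (n + 1) + η) * |f' (newton (n + 1))| :=
        mul_le_mul_of_nonneg_left hf'n1 hφpos
      have f3 : (((K * B) / 2 * (t (n + 1)) ^ 2 - t (n + 1) + η) / B) * (1 - (K * B) * t (n + 1)) =
          ((K * B) / 2 * (t (n + 1)) ^ 2 - t (n + 1) + η) * ((1 - (K * B) * t (n + 1)) / B) := by
        ring
      linarith
  have hne : ∀ n, f' (newton n) ≠ 0 := fun n =>
    abs_pos.1 (lt_of_lt_of_le (div_pos (tfacts n).2.2.1 hB) (fder n (main n).1))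
  have hmem : ∀ n, newton n ∈ Metric.closedBall x₀ r := fun n =>
    memD (le_trans (main n).1 (tfacts n).2.1)
  refine ⟨hne, hmem, ?_⟩
  have hhalf : ∀ n : ℕ, r / 2 ^ n = r * (1 / 2 : ℝ) ^ n := by
    intro n; rw [div_pow, one_pow]; ring
  have hstepbound : ∀ n, |f (newton n) / f' (newton n)| ≤ r * (1 / 2 : ℝ) ^ n := by
    intro n
    have h1 := (main n).2
    have h2 : t (n + 1) ≤ r := (tfacts (n + 1)).2.1
    have h3 : r - t n ≤ r / 2 ^ n := rate n
    rw [← hhalf n]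
    linarith
  have hdist : ∀ n, dist (newton n) (newton (n + 1)) ≤ r * (1 / 2 : ℝ) ^ n := by
    intro n
    rw [Real.dist_eq, abs_sub_comm, show newton (n + 1) - newton n =
      -(f (newton n) / f' (newton n)) from by rw [hnrec n]; ring, abs_neg]
    exact hstepbound n
  have hcauchy : CauchySeq newton := cauchySeq_of_le_geometric (1 / 2) r (by norm_num) hdist
  obtain ⟨xs, hxs⟩ := cauchySeq_tendsto_of_complete hcauchy
  have hxsD : xs ∈ Metric.closedBall x₀ r :=
    Metric.isClosed_closedBall.mem_of_tendsto hxs (Eventually.of_forall hmem)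
  refine ⟨xs, hxsD, hxs, ?_⟩
  have hM : ∀ n, |f (newton n)| ≤ (|f' x₀| + K * r) * (r * (1 / 2 : ℝ) ^ n) := by
    intro n
    have h1 : |f (newton n)| = |f (newton n) / f' (newton n)| * |f' (newton n)| := by
      rw [abs_div, div_mul_cancel₀ _ (abs_ne_zero.2 (hne n))]
    have hl := lip _ (hmem n) _ hx₀D
    have h3 : |newton n - x₀| ≤ r := le_trans (main n).1 (tfacts n).2.1
    have h4 : |f' (newton n)| - |f' x₀| ≤ |f' (newton n) - f' x₀| :=
      abs_sub_abs_le_abs_sub _ _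
    have h2 : |f' (newton n)| ≤ |f' x₀| + K * r := by
      have h5 : K * |newton n - x₀| ≤ K * r := mul_le_mul_of_nonneg_left h3 hK.le
      linarith
    rw [h1]
    have := mul_le_mul (hstepbound n) h2 (abs_nonneg _)
      (by positivity : (0 : ℝ) ≤ r * (1 / 2 : ℝ) ^ n)
    linarith [this]
  have hlim0 : Tendsto (fun n => f (newton n)) atTop (nhds 0) := by
    apply squeeze_zero_norm (fun n => by simpa [Real.norm_eq_abs] using hM n)
    have hp : Tendsto (fun n : ℕ => ((1 : ℝ) / 2) ^ n) atTop (nhds 0) := by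
      apply tendsto_pow_atTop_nhds_zero_of_lt_one <;> norm_num
    have := hp.const_mul ((|f' x₀| + K * r) * r)
    simpa [mul_assoc] using this
  have hlimf : Tendsto (fun n => f (newton n)) atTop (nhds (f xs)) :=
    ((hdf xs (hDsub hxsD)).continuousAt).tendsto.comp hxs
  exact tendsto_nhds_unique hlimf hlim0
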